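/- Let X ⊆ ℝⁿ be convex and let γ_p : ℝⁿ → ℝ be a scoring function. Suppose the strict epistemic pooling principle holds for average pooling for all e, f ∈ X, i.e., for all e, f ∈ X, γ_p((e+f)/2) > 0 ↔ (γ_p(e) > 0 ∨ γ_p(f) > 0). Then the negative region Neg_p = {e ∈ X : γ_p(e) ≤ 0} is a convex set. -/
import Mathlib


/-- Under the strict epistemic pooling principle for average pooling on a
convex set X, the negative region Neg_p = {e ∈ X : γ_p(e) ≤ 0} is convex. -/
theorem avg_pooling_neg_convex (n : ℕ) (X : Set (Fin n → ℝ))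
    (hX : Convex ℝ X) (γ : (Fin n → ℝ) → ℝ)
    (hpool : ∀ e ∈ X, ∀ f ∈ X, γ ((e + f) / 2) > 0 ↔ (γ e > 0 ∨ γ f > 0)) :
    Convex ℝ {e ∈ X | γ e ≤ 0} := by
  rintro e ⟨heX, heγ⟩ f ⟨hfX, hfγ⟩ a b ha hb hab
  refine ⟨hX heX hfX ha hb hab, ?_⟩
  by_contra hpos
  push_neg at hpos
  set c : ℝ → (Fin n → ℝ) := fun t => (1 - t) • e + t • f with hc
  have mem : ∀ t : ℝ, 0 ≤ t → t ≤ 1 → c t ∈ X := fun t h0 h1 =>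
    hX heX hfX (by linarith) h0 (by ring)
  have hmid : ∀ s t : ℝ, (c s + c t) / 2 = c ((s + t) / 2) := by
    intro s t; funext i
    simp [hc, Pi.add_apply, Pi.smul_apply, Pi.div_apply]
    ring
  have hc0 : c 0 = e := by funext i; simp [hc]
  have hcb : c b = a • e + b • f := by
    have : a = 1 - b := by linarith
    simp [hc, this]
  -- midpoint of e and f is non-positive
  have hhalf : ¬ γ (c (1/2)) > 0 := by
    have h := hpool e heX f hfX
    have : (e + f) / 2 = c (1/2) := by
      have := hmid 0 1
      rw [hc0] at this
      have hc1 : c 1 = f := by funext i; simp [hc]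
      rw [hc1] at this
      simpa using this
    rw [this] at h
    intro hgt
    rcases h.mp hgt with h' | h' <;> linarith
  -- γ (c b) > 0
  have hb_pos : γ (c b) > 0 := by rw [hcb]; exact hpos
  -- γ (c (b/2)) > 0
  have h1 : γ (c (b/2)) > 0 := by
    have h := hpool e heX (c b) (mem b hb (by linarith))
    have heq : (e + c b) / 2 = c (b/2) := by
      have := hmid 0 b; rw [hc0] at this; simpa using this
    rw [heq] at h
    exact h.mpr (Or.inr hb_pos)
  -- γ (c (1/4)) > 0
  have h2 : γ (c (1/4)) > 0 := by
    have h := hpool (c (b/2)) (mem _ (by linarith) (by linarith))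
      (c (a/2)) (mem _ (by linarith) (by linarith))
    rw [hmid] at h
    have : (b/2 + a/2) / 2 = (1:ℝ)/4 := by linarith
    rw [this] at h
    exact h.mpr (Or.inl h1)
  -- but γ (c (1/4)) > 0 forces γ (c (1/2)) > 0
  have h3 := hpool e heX (c (1/2)) (mem _ (by norm_num) (by norm_num))
  have heq : (e + c (1/2)) / 2 = c (1/4) := by
    have := hmid 0 (1/2); rw [hc0] at this
    norm_num at this ⊢
    exact this
  rw [heq] at h3
  rcases h3.mp h2 with h' | h'
  · linarith
  · exact hhalf h'
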